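/- For every prime p, the set (ℤ_p)⁶ with the multiplication of F_p is a commutative loop with identity (0,0,0,0,0,0) satisfying identity (A), and its center, its left nucleus {z : (z·a)·b = z·(a·b) for all a,b}, and its middle nucleus {z : (a·z)·b = a·(z·b) for all a,b} all coincide and equal {(0,0,c3,c4,c5,c6) : c3,c4,c5,c6 ∈ ℤ_p}. -/

import Mathlib

/-- The modular overflow indicator `(a,b)_p`. -/
def ovf (p : ℕ) (a b : ZMod p) : ZMod p := if p ≤ a.val + b.val then 1 else 0

/-- The carrier `(ℤ_p)⁶` of the loop `F_p`. -/
abbrev FpCarrier (p : ℕ) := ZMod p × ZMod p × ZMod p × ZMod p × ZMod p × ZMod p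

/-- The multiplication of the loop `F_p`. -/
def fpMul (p : ℕ) : FpCarrier p → FpCarrier p → FpCarrier p
  | (a1, a2, a3, a4, a5, a6), (b1, b2, b3, b4, b5, b6) =>
    (a1 + b1, a2 + b2, a3 + b3 + ovf p a1 b1, a4 + b4 + ovf p a2 b2,
     a5 + b5 - a1 * b1 * (a2 + b2), a6 + b6 + a2 * b2 * (a1 + b1))

set_option linter.unusedSectionVars false

section aux
variable {p : ℕ} [NeZero p]

def novf (a b : ZMod p) : ℕ := if p ≤ a.val + b.val then 1 else 0

lemma ovf_eq_cast (a b : ZMod p) : ovf p a b = (novf a b : ℕ) := by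
  unfold ovf novf; split_ifs <;> simp

lemma val_add_novf (a b : ZMod p) :
    (a + b).val + p * novf a b = a.val + b.val := by
  have ha := ZMod.val_lt a
  have hb := ZMod.val_lt b
  rw [ZMod.val_add, novf]
  split_ifs with h
  · rw [Nat.mod_eq_sub_mod h, Nat.mod_eq_of_lt (by omega)]; omega
  · rw [Nat.mod_eq_of_lt (by omega)]; omega

lemma novf_assoc (x y c : ZMod p) :
    novf x c + novf y (x + c) = novf y x + novf (y + x) c := by
  have h1 := val_add_novf x c
  have h2 := val_add_novf y (x + c)
  have h3 := val_add_novf y x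
  have h4 := val_add_novf (y + x) c
  have e : y + (x + c) = (y + x) + c := by ring
  rw [e] at h2
  have hp : 0 < p := Nat.pos_of_ne_zero (NeZero.ne p)
  have : p * (novf x c + novf y (x + c)) = p * (novf y x + novf (y + x) c) := by
    rw [Nat.mul_add, Nat.mul_add]; omega
  exact Nat.eq_of_mul_eq_mul_left hp this

lemma ovf_assoc (x y c : ZMod p) :
    ovf p x c + ovf p y (x + c) = ovf p y x + ovf p (y + x) c := by
  rw [ovf_eq_cast, ovf_eq_cast, ovf_eq_cast, ovf_eq_cast]
  rw [← Nat.cast_add, ← Nat.cast_add, novf_assoc]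

lemma ovf_comm (a b : ZMod p) : ovf p a b = ovf p b a := by
  unfold ovf; rw [Nat.add_comm]

@[simp] lemma ovf_zero_left (a : ZMod p) : ovf p 0 a = 0 := by
  unfold ovf
  rw [if_neg]
  simpa using ZMod.val_lt a

@[simp] lemma ovf_zero_right (a : ZMod p) : ovf p a 0 = 0 := by
  rw [ovf_comm]; exact ovf_zero_left a

/-- Explicit left division. -/
def fpDiv (g h : FpCarrier p) : FpCarrier p :=
  (h.1 - g.1, h.2.1 - g.2.1,
   h.2.2.1 - g.2.2.1 - ovf p g.1 (h.1 - g.1),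
   h.2.2.2.1 - g.2.2.2.1 - ovf p g.2.1 (h.2.1 - g.2.1),
   h.2.2.2.2.1 - g.2.2.2.2.1 + g.1 * (h.1 - g.1) * h.2.1,
   h.2.2.2.2.2 - g.2.2.2.2.2 - g.2.1 * (h.2.1 - g.2.1) * h.1)

lemma fpMul_fpDiv (g h : FpCarrier p) : fpMul p g (fpDiv g h) = h := by
  obtain ⟨g1, g2, g3, g4, g5, g6⟩ := g
  obtain ⟨h1, h2, h3, h4, h5, h6⟩ := h
  simp only [fpMul, fpDiv, Prod.mk.injEq]
  refine ⟨by ring, by ring, by ring, by ring, by ring, by ring⟩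

lemma fp_left_cancel {g u u' : FpCarrier p} (h : fpMul p g u = fpMul p g u') :
    u = u' := by
  obtain ⟨g1, g2, g3, g4, g5, g6⟩ := g
  obtain ⟨u1, u2, u3, u4, u5, u6⟩ := u
  obtain ⟨v1, v2, v3, v4, v5, v6⟩ := u'
  simp only [fpMul, Prod.mk.injEq] at h
  obtain ⟨h1, h2, h3, h4, h5, h6⟩ := h
  have e1 : u1 = v1 := by linear_combination h1
  have e2 : u2 = v2 := by linear_combination h2
  subst e1; subst e2
  simp only [Prod.mk.injEq]
  exact ⟨trivial, trivial, by linear_combination h3, by linear_combination h4,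
    by linear_combination h5, by linear_combination h6⟩

lemma fpMul_comm (a b : FpCarrier p) : fpMul p a b = fpMul p b a := by
  obtain ⟨a1, a2, a3, a4, a5, a6⟩ := a
  obtain ⟨b1, b2, b3, b4, b5, b6⟩ := b
  simp only [fpMul, Prod.mk.injEq]
  refine ⟨by ring, by ring, ?_, ?_, by ring, by ring⟩
  · rw [ovf_comm]; ring
  · rw [ovf_comm]; ring

/-- The translation map in identity (A). -/
def fpPhi (x y c : FpCarrier p) : FpCarrier p :=
  (c.1, c.2.1, c.2.2.1, c.2.2.2.1,
   c.2.2.2.2.1 + x.1 * y.2.1 * c.1 - x.1 * y.1 * c.2.1,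
   c.2.2.2.2.2 + x.2.1 * y.2.1 * c.1 - x.2.1 * y.1 * c.2.1)

lemma fpPhi_spec (x y c : FpCarrier p) :
    fpMul p (fpMul p y x) (fpPhi x y c) = fpMul p y (fpMul p x c) := by
  obtain ⟨x1, x2, x3, x4, x5, x6⟩ := x
  obtain ⟨y1, y2, y3, y4, y5, y6⟩ := y
  obtain ⟨c1, c2, c3, c4, c5, c6⟩ := c
  simp only [fpMul, fpPhi, Prod.mk.injEq]
  refine ⟨by ring, by ring, ?_, ?_, by ring, by ring⟩
  · linear_combination - ovf_assoc x1 y1 c1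
  · linear_combination - ovf_assoc x2 y2 c2

lemma fpPhi_mul (x y a b : FpCarrier p) :
    fpPhi x y (fpMul p a b) = fpMul p (fpPhi x y a) (fpPhi x y b) := by
  obtain ⟨x1, x2, x3, x4, x5, x6⟩ := x
  obtain ⟨y1, y2, y3, y4, y5, y6⟩ := y
  obtain ⟨a1, a2, a3, a4, a5, a6⟩ := a
  obtain ⟨b1, b2, b3, b4, b5, b6⟩ := b
  simp only [fpMul, fpPhi, Prod.mk.injEq]
  refine ⟨trivial, trivial, trivial, trivial, by ring, by ring⟩

lemma fp_lnuc (z3 z4 z5 z6 : ZMod p) (a b : FpCarrier p) :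
    fpMul p (fpMul p (0, 0, z3, z4, z5, z6) a) b
      = fpMul p (0, 0, z3, z4, z5, z6) (fpMul p a b) := by
  obtain ⟨a1, a2, a3, a4, a5, a6⟩ := a
  obtain ⟨b1, b2, b3, b4, b5, b6⟩ := b
  simp only [fpMul, Prod.mk.injEq, zero_add, zero_mul, mul_zero, add_zero,
    ovf_zero_left]
  exact ⟨trivial, trivial, by ring, by ring, by ring, by ring⟩

lemma fp_mnuc (z3 z4 z5 z6 : ZMod p) (a b : FpCarrier p) :
    fpMul p (fpMul p a (0, 0, z3, z4, z5, z6)) b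
      = fpMul p a (fpMul p (0, 0, z3, z4, z5, z6) b) := by
  obtain ⟨a1, a2, a3, a4, a5, a6⟩ := a
  obtain ⟨b1, b2, b3, b4, b5, b6⟩ := b
  simp only [fpMul, Prod.mk.injEq, zero_add, add_zero, zero_mul, mul_zero,
    ovf_zero_left, ovf_zero_right]
  exact ⟨trivial, trivial, by ring, by ring, by ring, by ring⟩

lemma fp_rnuc (z3 z4 z5 z6 : ZMod p) (a b : FpCarrier p) :
    fpMul p (fpMul p a b) (0, 0, z3, z4, z5, z6)
      = fpMul p a (fpMul p b (0, 0, z3, z4, z5, z6)) := by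
  obtain ⟨a1, a2, a3, a4, a5, a6⟩ := a
  obtain ⟨b1, b2, b3, b4, b5, b6⟩ := b
  simp only [fpMul, Prod.mk.injEq, zero_add, add_zero, zero_mul, mul_zero,
    ovf_zero_left, ovf_zero_right]
  exact ⟨trivial, trivial, by ring, by ring, by ring, by ring⟩

/-- Extraction of `z1 = 0 ∧ z2 = 0` from the left-nucleus property. -/
lemma fp_lnuc_extract {z : FpCarrier p}
    (h : ∀ a b, fpMul p (fpMul p z a) b = fpMul p z (fpMul p a b)) :
    z.1 = 0 ∧ z.2.1 = 0 := by
  obtain ⟨z1, z2, z3, z4, z5, z6⟩ := z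
  have h1 := h (1, 0, 0, 0, 0, 0) (0, 1, 0, 0, 0, 0)
  have h2 := h (0, 1, 0, 0, 0, 0) (1, 0, 0, 0, 0, 0)
  simp only [fpMul, Prod.mk.injEq] at h1 h2
  exact ⟨by linear_combination h1.2.2.2.2.1, by linear_combination - h2.2.2.2.2.2⟩

lemma fp_mnuc_extract {z : FpCarrier p}
    (h : ∀ a b, fpMul p (fpMul p a z) b = fpMul p a (fpMul p z b)) :
    z.1 = 0 ∧ z.2.1 = 0 := by
  obtain ⟨z1, z2, z3, z4, z5, z6⟩ := z
  have h1 := h (1, 0, 0, 0, 0, 0) (0, 1, 0, 0, 0, 0)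
  have h2 := h (0, 1, 0, 0, 0, 0) (1, 0, 0, 0, 0, 0)
  simp only [fpMul, Prod.mk.injEq] at h1 h2
  exact ⟨by linear_combination h1.2.2.2.2.1, by linear_combination - h2.2.2.2.2.2⟩

end aux

/-- `F_p` is a commutative loop with identity `(0,0,0,0,0,0)` satisfying identity (A)
(stated via unique solutions), and its center, left nucleus and middle nucleus coincide
and equal the set of elements whose first two coordinates vanish. -/
theorem stmt_8 (p : ℕ) (hp : p.Prime) :
    (∀ a, fpMul p (0, 0, 0, 0, 0, 0) a = a) ∧
    (∀ a, fpMul p a (0, 0, 0, 0, 0, 0) = a) ∧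
    (∀ a b, ∃! x, fpMul p a x = b) ∧
    (∀ a b, ∃! y, fpMul p y a = b) ∧
    (∀ a b, fpMul p a b = fpMul p b a) ∧
    (∀ x y a b u v w,
      fpMul p (fpMul p y x) u = fpMul p y (fpMul p x (fpMul p a b)) →
      fpMul p (fpMul p y x) v = fpMul p y (fpMul p x a) →
      fpMul p (fpMul p y x) w = fpMul p y (fpMul p x b) →
      u = fpMul p v w) ∧
    ({z : FpCarrier p |
        (∀ a, fpMul p z a = fpMul p a z) ∧
        (∀ a b, fpMul p (fpMul p z a) b = fpMul p z (fpMul p a b)) ∧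
        (∀ a b, fpMul p (fpMul p a z) b = fpMul p a (fpMul p z b)) ∧
        (∀ a b, fpMul p (fpMul p a b) z = fpMul p a (fpMul p b z))}
      = {z : FpCarrier p | z.1 = 0 ∧ z.2.1 = 0}) ∧
    ({z : FpCarrier p | ∀ a b, fpMul p (fpMul p z a) b = fpMul p z (fpMul p a b)}
      = {z : FpCarrier p | z.1 = 0 ∧ z.2.1 = 0}) ∧
    ({z : FpCarrier p | ∀ a b, fpMul p (fpMul p a z) b = fpMul p a (fpMul p z b)}
      = {z : FpCarrier p | z.1 = 0 ∧ z.2.1 = 0}) := by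
  haveI : NeZero p := ⟨hp.ne_zero⟩
  refine ⟨?_, ?_, ?_, ?_, fpMul_comm, ?_, ?_, ?_, ?_⟩
  · intro a; obtain ⟨a1, a2, a3, a4, a5, a6⟩ := a
    simp [fpMul]
  · intro a; obtain ⟨a1, a2, a3, a4, a5, a6⟩ := a
    simp [fpMul]
  · intro a b
    exact ⟨fpDiv a b, fpMul_fpDiv a b,
      fun y hy => fp_left_cancel (hy.trans (fpMul_fpDiv a b).symm)⟩
  · intro a b
    refine ⟨fpDiv a b, (fpMul_comm _ _).trans (fpMul_fpDiv a b), fun y hy => ?_⟩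
    exact fp_left_cancel (((fpMul_comm a y).trans hy).trans
      (fpMul_fpDiv a b).symm)
  · intro x y a b u v w hu hv hw
    have eu : u = fpPhi x y (fpMul p a b) :=
      fp_left_cancel (hu.trans (fpPhi_spec x y (fpMul p a b)).symm)
    have ev : v = fpPhi x y a :=
      fp_left_cancel (hv.trans (fpPhi_spec x y a).symm)
    have ew : w = fpPhi x y b :=
      fp_left_cancel (hw.trans (fpPhi_spec x y b).symm)
    rw [eu, ev, ew, fpPhi_mul]
  · ext z
    simp only [Set.mem_setOf_eq]
    constructor
    · rintro ⟨-, hl, -, -⟩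
      exact fp_lnuc_extract hl
    · obtain ⟨z1, z2, z3, z4, z5, z6⟩ := z
      rintro ⟨h1, h2⟩
      simp only at h1 h2
      subst h1; subst h2
      exact ⟨fun a => fpMul_comm _ _, fp_lnuc z3 z4 z5 z6, fp_mnuc z3 z4 z5 z6,
        fp_rnuc z3 z4 z5 z6⟩
  · ext z
    simp only [Set.mem_setOf_eq]
    constructor
    · exact fun hl => fp_lnuc_extract hl
    · obtain ⟨z1, z2, z3, z4, z5, z6⟩ := z
      rintro ⟨h1, h2⟩
      simp only at h1 h2
      subst h1; subst h2
      exact fp_lnuc z3 z4 z5 z6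
  · ext z
    simp only [Set.mem_setOf_eq]
    constructor
    · exact fun hm => fp_mnuc_extract hm
    · obtain ⟨z1, z2, z3, z4, z5, z6⟩ := z
      rintro ⟨h1, h2⟩
      simp only at h1 h2
      subst h1; subst h2
      exact fp_mnuc z3 z4 z5 z6
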